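/- Isometry property of the CDT: for probability densities p, q on ℝ with finite second moments and a reference density s₀, one has d_{W²}²(p, q) = ∫ |C(p)(x) − C(q)(x)|² s₀(x) dx, where C(p) = F_p† ∘ F_{s₀}. -/

import Mathlib

open MeasureTheory Set Filter Topology
open scoped Classical ENNReal NNReal

/-- Cumulation of a signal: `F_s(x) = ∫_{-∞}^x s(t) dt`. -/
noncomputable def cum (s : ℝ → ℝ) (x : ℝ) : ℝ := ∫ t in Set.Iic x, s t

/-- Real-valued generalized inverse `F†(y) = inf {x : F x > y}`. -/
noncomputable def genInvR (F : ℝ → ℝ) (y : ℝ) : ℝ := sInf {x : ℝ | F x > y}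

/-- The CDT of a density `s` with respect to a reference density `s₀`:
`C(s) = F_s† ∘ F_{s₀}`. -/
noncomputable def cdt (s₀ s : ℝ → ℝ) : ℝ → ℝ := fun x => genInvR (cum s) (cum s₀ x)

/-- Pointwise positive part `f⁺(x) = max {f x, 0}`. -/
def pPart (f : ℝ → ℝ) : ℝ → ℝ := fun x => max (f x) 0

/-- Pointwise negative part `f⁻(x) = max {-f x, 0}`. -/
def nPart (f : ℝ → ℝ) : ℝ → ℝ := fun x => max (-(f x)) 0

/-- `L¹` norm `‖f‖₁ = ∫ |f|`. -/
noncomputable def l1 (f : ℝ → ℝ) : ℝ := ∫ x, |f x|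

/-- The warped signal `s_g(x) = g'(x) · s(g(x))`. -/
noncomputable def warp (g s : ℝ → ℝ) : ℝ → ℝ := fun x => deriv g x * s (g x)

/-- First SCDT component `(s⁺)★ = C(s⁺/‖s⁺‖₁)` (and `0` if `s⁺` is trivial). -/
noncomputable def scdtPos (s₀ s : ℝ → ℝ) : ℝ → ℝ :=
  if pPart s = 0 then 0 else cdt s₀ (fun x => pPart s x / l1 (pPart s))

/-- Third SCDT component `(s⁻)★ = C(s⁻/‖s⁻‖₁)` (and `0` if `s⁻` is trivial). -/
noncomputable def scdtNeg (s₀ s : ℝ → ℝ) : ℝ → ℝ :=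
  if nPart s = 0 then 0 else cdt s₀ (fun x => nPart s x / l1 (nPart s))

/-- The measure on `ℝ` with density `p` w.r.t. Lebesgue measure. -/
noncomputable def densMeasure (p : ℝ → ℝ) : Measure ℝ :=
  volume.withDensity (fun x => ENNReal.ofReal (p x))

/-- Squared 2-Wasserstein distance, as the infimum of the quadratic transport
cost over all couplings. -/
noncomputable def w2sq (μ ν : Measure ℝ) : ℝ :=
  sInf {c : ℝ | ∃ π : Measure (ℝ × ℝ),
    π.map Prod.fst = μ ∧ π.map Prod.snd = ν ∧ c = ∫ p, (p.1 - p.2) ^ 2 ∂π}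

section AuxCDT

variable {f : ℝ → ℝ}

lemma cum_mono (hf : Integrable f) (h0 : ∀ x, 0 ≤ f x) : Monotone (cum f) := fun a b hab =>
  setIntegral_mono_set hf.integrableOn (Eventually.of_forall h0)
    ((Iic_subset_Iic.2 hab).eventuallyLE)

lemma cum_nonneg (h0 : ∀ x, 0 ≤ f x) (x : ℝ) : 0 ≤ cum f x :=
  setIntegral_nonneg measurableSet_Iic fun y _ => h0 y

lemma cum_le_total (hf : Integrable f) (h0 : ∀ x, 0 ≤ f x) (x : ℝ) : cum f x ≤ ∫ y, f y :=
  setIntegral_le_integral hf (Eventually.of_forall h0)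

lemma cum_continuous (hf : Integrable f) : Continuous (cum f) := by
  have : cum f = fun x => cum f 0 + ∫ t in (0:ℝ)..x, f t := by
    funext x
    have h := intervalIntegral.integral_Iic_sub_Iic (μ := volume) (f := f)
      hf.integrableOn hf.integrableOn (a := 0) (b := x)
    simp only [cum]
    linarith
  rw [this]
  exact continuous_const.add (hf.continuous_primitive 0)

lemma densMeasure_apply (hf : Integrable f) (h0 : ∀ x, 0 ≤ f x) {s : Set ℝ}
    (hs : MeasurableSet s) : densMeasure f s = ENNReal.ofReal (∫ x in s, f x) := by
  rw [densMeasure, withDensity_apply _ hs,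
    ← ofReal_integral_eq_lintegral_ofReal hf.integrableOn (Eventually.of_forall h0)]

lemma densMeasure_prob (hf : Integrable f) (h0 : ∀ x, 0 ≤ f x) (h1 : ∫ x, f x = 1) :
    IsProbabilityMeasure (densMeasure f) := by
  constructor
  rw [densMeasure_apply hf h0 MeasurableSet.univ]
  simp [h1]

lemma cum_eq_toReal (hf : Integrable f) (h0 : ∀ x, 0 ≤ f x) (x : ℝ) :
    cum f x = (densMeasure f (Iic x)).toReal := by
  rw [densMeasure_apply hf h0 measurableSet_Iic]
  exact (ENNReal.toReal_ofReal (cum_nonneg h0 x)).symm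

lemma cum_tendsto_atTop (hf : Integrable f) (h0 : ∀ x, 0 ≤ f x) (h1 : ∫ x, f x = 1) :
    Tendsto (cum f) atTop (𝓝 1) := by
  have := densMeasure_prob hf h0 h1
  have h := tendsto_measure_Iic_atTop (densMeasure f)
  rw [measure_univ] at h
  have h2 := (ENNReal.tendsto_toReal (by simp : (1:ℝ≥0∞) ≠ ⊤)).comp h
  simp only [Function.comp_def, ENNReal.toReal_one] at h2
  exact h2.congr fun x => (cum_eq_toReal hf h0 x).symm

lemma cum_tendsto_atBot (hf : Integrable f) (h0 : ∀ x, 0 ≤ f x) (h1 : ∫ x, f x = 1) :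
    Tendsto (cum f) atBot (𝓝 0) := by
  have := densMeasure_prob hf h0 h1
  have h : Tendsto (densMeasure f ∘ fun x : ℝ => Iic x) atBot (𝓝 (densMeasure f (⋂ x : ℝ, Iic x))) :=
    tendsto_measure_iInter_atBot (fun _ => measurableSet_Iic.nullMeasurableSet)
      (fun _ _ hab => Iic_subset_Iic.2 hab) ⟨0, measure_ne_top _ _⟩
  rw [show (⋂ x : ℝ, Iic x) = ∅ by
      ext y; simp only [mem_iInter, mem_Iic, mem_empty_iff_false, iff_false, not_forall]
      exact ⟨y - 1, by push_cast; linarith⟩] at h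
  rw [measure_empty] at h
  have h2 := (ENNReal.tendsto_toReal (by simp : (0:ℝ≥0∞) ≠ ⊤)).comp h
  simp only [Function.comp_def, ENNReal.toReal_zero] at h2
  exact h2.congr fun x => (cum_eq_toReal hf h0 x).symm

lemma cum_le_one (hf : Integrable f) (h0 : ∀ x, 0 ≤ f x) (h1 : ∫ x, f x = 1) (x : ℝ) :
    cum f x ≤ 1 := h1 ▸ cum_le_total hf h0 x

/-! quantile lemmas -/

lemma bddBelow_cumGt (hf : Integrable f) (h0 : ∀ x, 0 ≤ f x) (h1 : ∫ x, f x = 1)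
    {t : ℝ} (ht : 0 < t) : BddBelow {x | cum f x > t} := by
  obtain ⟨x₀, hx₀⟩ := ((cum_tendsto_atBot hf h0 h1).eventually_lt_const ht).exists
  refine ⟨x₀, fun y hy => ?_⟩
  by_contra hxy
  push_neg at hxy
  exact absurd (lt_of_le_of_lt (cum_mono hf h0 hxy.le) hx₀) (not_lt.2 hy.le)

lemma nonempty_cumGt (hf : Integrable f) (h0 : ∀ x, 0 ≤ f x) (h1 : ∫ x, f x = 1)
    {t : ℝ} (ht : t < 1) : {x | cum f x > t}.Nonempty :=
  ((cum_tendsto_atTop hf h0 h1).eventually_const_lt ht).exists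

lemma quantile_le (hf : Integrable f) (h0 : ∀ x, 0 ≤ f x) (h1 : ∫ x, f x = 1)
    {t x : ℝ} (ht : 0 < t) (h : t < cum f x) : genInvR (cum f) t ≤ x :=
  csInf_le (bddBelow_cumGt hf h0 h1 ht) h

lemma le_cum_of_quantile_le (hf : Integrable f) (h0 : ∀ x, 0 ≤ f x) (h1 : ∫ x, f x = 1)
    {t x : ℝ} (ht0 : 0 < t) (ht1 : t < 1) (h : genInvR (cum f) t ≤ x) : t ≤ cum f x := by
  have key : ∀ ε : ℝ, 0 < ε → t ≤ cum f (x + ε) := by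
    intro ε hε
    have hlt : sInf {x | cum f x > t} < x + ε := lt_of_le_of_lt h (by linarith)
    obtain ⟨y, hy, hyx⟩ := exists_lt_of_csInf_lt (nonempty_cumGt hf h0 h1 ht1) hlt
    exact le_trans hy.le (cum_mono hf h0 hyx.le)
  have hseq : Tendsto (fun n : ℕ => cum f (x + 1 / (n + 1))) atTop (𝓝 (cum f x)) := by
    have h1' : Tendsto (fun n : ℕ => x + 1 / ((n:ℝ) + 1)) atTop (𝓝 (x + 0)) :=
      tendsto_const_nhds.add tendsto_one_div_add_atTop_nhds_zero_nat
    rw [add_zero] at h1'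
    exact ((cum_continuous hf).tendsto x).comp h1'
  exact ge_of_tendsto' hseq fun n => key _ (by positivity)

lemma quantile_neg (h0 : ∀ x, 0 ≤ f x) {t : ℝ} (ht : t < 0) : genInvR (cum f) t = 0 := by
  have hset : {x | cum f x > t} = univ := eq_univ_of_forall fun x =>
    lt_of_lt_of_le ht (cum_nonneg h0 x)
  rw [genInvR, hset, Real.sInf_of_not_bddBelow]
  rintro ⟨b, hb⟩
  have := hb (mem_univ (b - 1))
  linarith

lemma quantile_ge_one (hf : Integrable f) (h0 : ∀ x, 0 ≤ f x) (h1 : ∫ x, f x = 1)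
    {t : ℝ} (ht : 1 ≤ t) : genInvR (cum f) t = 0 := by
  have hset : {x | cum f x > t} = ∅ := eq_empty_of_forall_notMem fun x hx =>
    absurd (lt_of_le_of_lt ht hx) (not_lt.2 (cum_le_one hf h0 h1 x))
  rw [genInvR, hset, Real.sInf_empty]

lemma quantile_measurable (hf : Integrable f) (h0 : ∀ x, 0 ≤ f x) (h1 : ∫ x, f x = 1) :
    Measurable (genInvR (cum f)) := by
  apply measurable_of_Iic
  intro x
  set Q := genInvR (cum f) with hQ
  set S := Q ⁻¹' Iic x with hS
  have hdecomp : S = (S ∩ Iio 0) ∪ (S ∩ {0}) ∪ (S ∩ Ioo 0 1) ∪ (S ∩ Ici 1) := by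
    rw [← inter_union_distrib_left, ← inter_union_distrib_left, ← inter_union_distrib_left]
    refine (inter_eq_left.2 fun t _ => ?_).symm
    rcases lt_trichotomy t 0 with h | h | h
    · exact Or.inl (Or.inl (Or.inl h))
    · exact Or.inl (Or.inl (Or.inr h))
    · rcases lt_or_ge t 1 with h' | h'
      · exact Or.inl (Or.inr ⟨h, h'⟩)
      · exact Or.inr h'
  rw [hdecomp]
  have m1 : MeasurableSet (S ∩ Iio 0) := by
    rcases le_or_gt 0 x with hx | hx
    · have : S ∩ Iio 0 = Iio 0 := inter_eq_right.2 fun t ht => by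
        simp only [hS, mem_preimage, mem_Iic, hQ, quantile_neg h0 ht]; exact hx
      rw [this]; exact measurableSet_Iio
    · have : S ∩ Iio 0 = ∅ := eq_empty_of_forall_notMem fun t ⟨h1', h2'⟩ => by
        rw [hS, mem_preimage, mem_Iic, hQ, quantile_neg h0 h2'] at h1'; linarith
      rw [this]; exact MeasurableSet.empty
  have m2 : MeasurableSet (S ∩ ({0} : Set ℝ)) :=
    (Set.Countable.mono inter_subset_right (countable_singleton 0)).measurableSet
  have m4 : MeasurableSet (S ∩ Ici 1) := by
    rcases le_or_gt 0 x with hx | hx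
    · have : S ∩ Ici 1 = Ici 1 := inter_eq_right.2 fun t ht => by
        simp only [hS, mem_preimage, mem_Iic, hQ, quantile_ge_one hf h0 h1 ht]; exact hx
      rw [this]; exact measurableSet_Ici
    · have : S ∩ Ici 1 = ∅ := eq_empty_of_forall_notMem fun t ⟨h1', h2'⟩ => by
        rw [hS, mem_preimage, mem_Iic, hQ, quantile_ge_one hf h0 h1 h2'] at h1'; linarith
      rw [this]; exact MeasurableSet.empty
  have m3 : MeasurableSet (S ∩ Ioo 0 1) := by
    have hsub : S ∩ Ioo 0 1 = (Iio (cum f x) ∩ Ioo 0 1) ∪ (S ∩ Ioo 0 1 ∩ {cum f x}) := by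
      ext t
      constructor
      · rintro ⟨hts, ht01⟩
        have hle : t ≤ cum f x := le_cum_of_quantile_le hf h0 h1 ht01.1 ht01.2 hts
        rcases lt_or_eq_of_le hle with hlt | heq
        · exact Or.inl ⟨hlt, ht01⟩
        · exact Or.inr ⟨⟨hts, ht01⟩, heq⟩
      · rintro (⟨hlt, ht01⟩ | ⟨hmem, _⟩)
        · exact ⟨quantile_le hf h0 h1 ht01.1 hlt, ht01⟩
        · exact hmem
    rw [hsub]
    exact (measurableSet_Iio.inter measurableSet_Ioo).union
      ((Set.Countable.mono inter_subset_right (countable_singleton _)).measurableSet)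
  exact ((m1.union m2).union m3).union m4

lemma map_quantile (hf : Integrable f) (h0 : ∀ x, 0 ≤ f x) (h1 : ∫ x, f x = 1) :
    Measure.map (genInvR (cum f)) (volume.restrict (Ioo (0:ℝ) 1)) = densMeasure f := by
  have hQm := quantile_measurable hf h0 h1
  have hfin : IsFiniteMeasure (volume.restrict (Ioo (0:ℝ) 1)) := by
    constructor
    rw [Measure.restrict_apply_univ, Real.volume_Ioo]
    exact ENNReal.ofReal_lt_top
  have hfin2 : IsFiniteMeasure (Measure.map (genInvR (cum f)) (volume.restrict (Ioo (0:ℝ) 1))) := by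
    constructor
    rw [Measure.map_apply hQm MeasurableSet.univ, preimage_univ, Measure.restrict_apply_univ,
      Real.volume_Ioo]
    exact ENNReal.ofReal_lt_top
  refine Measure.ext_of_Iic _ _ fun x => ?_
  rw [Measure.map_apply hQm measurableSet_Iic, Measure.restrict_apply (hQm measurableSet_Iic),
    densMeasure_apply hf h0 measurableSet_Iic]
  have hFx0 := cum_nonneg h0 x
  have hFx1 := cum_le_one hf h0 h1 x
  apply le_antisymm
  · calc volume (genInvR (cum f) ⁻¹' Iic x ∩ Ioo 0 1) ≤ volume (Ioc 0 (cum f x)) := by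
          apply measure_mono
          rintro t ⟨ht, ht01⟩
          exact ⟨ht01.1, le_cum_of_quantile_le hf h0 h1 ht01.1 ht01.2 ht⟩
      _ = ENNReal.ofReal (cum f x) := by rw [Real.volume_Ioc, sub_zero]
  · calc ENNReal.ofReal (cum f x) = volume (Ioo 0 (cum f x)) := by
          rw [Real.volume_Ioo, sub_zero]
      _ ≤ volume (genInvR (cum f) ⁻¹' Iic x ∩ Ioo 0 1) := by
          apply measure_mono
          rintro t ⟨ht0, htF⟩
          exact ⟨quantile_le hf h0 h1 ht0 htF, ht0, lt_of_lt_of_le htF hFx1⟩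

lemma map_cum (hf : Integrable f) (h0 : ∀ x, 0 ≤ f x) (h1 : ∫ x, f x = 1) :
    Measure.map (cum f) (densMeasure f) = volume.restrict (Ioo (0:ℝ) 1) := by
  have hcont := cum_continuous hf
  have hFm : Measurable (cum f) := hcont.measurable
  have hprob := densMeasure_prob hf h0 h1
  have hfin2 : IsFiniteMeasure (Measure.map (cum f) (densMeasure f)) := by
    constructor
    rw [Measure.map_apply hFm MeasurableSet.univ, preimage_univ]
    exact measure_lt_top _ _
  refine Measure.ext_of_Iic _ _ fun u => ?_
  rw [Measure.map_apply hFm measurableSet_Iic, Measure.restrict_apply measurableSet_Iic]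
  rcases lt_or_ge u 0 with hu | hu
  · have h1' : cum f ⁻¹' Iic u = ∅ := eq_empty_of_forall_notMem fun t ht =>
      absurd (le_trans (cum_nonneg h0 t) ht) (not_le.2 hu)
    have h2' : Iic u ∩ Ioo (0:ℝ) 1 = ∅ := eq_empty_of_forall_notMem fun t ⟨ht, ht01⟩ =>
      absurd (lt_of_le_of_lt ht hu) (not_lt.2 ht01.1.le)
    rw [h1', h2', measure_empty, measure_empty]
  rcases le_or_gt 1 u with hu1 | hu1
  · have h1' : cum f ⁻¹' Iic u = univ := eq_univ_of_forall fun t =>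
      le_trans (cum_le_one hf h0 h1 t) hu1
    have h2' : Iic u ∩ Ioo (0:ℝ) 1 = Ioo 0 1 := inter_eq_right.2 fun t ht => le_trans ht.2.le hu1
    rw [h1', h2', measure_univ, Real.volume_Ioo]
    norm_num
  -- 0 ≤ u < 1
  have h2' : Iic u ∩ Ioo (0:ℝ) 1 = Ioc 0 u := by
    ext t
    constructor
    · rintro ⟨ht, ht01⟩; exact ⟨ht01.1, ht⟩
    · rintro ⟨ht0, htu⟩; exact ⟨htu, ht0, lt_of_le_of_lt htu hu1⟩
  rw [h2', Real.volume_Ioc, sub_zero]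
  set A := cum f ⁻¹' Iic u with hA
  rcases eq_empty_or_nonempty A with hAe | hAne
  · -- then u = 0
    have hu0 : u = 0 := by
      by_contra h
      have hu' : 0 < u := lt_of_le_of_ne hu (Ne.symm h)
      obtain ⟨x₀, hx₀⟩ := ((cum_tendsto_atBot hf h0 h1).eventually_lt_const hu').exists
      have : x₀ ∈ A := by rw [hA]; exact mem_preimage.2 (mem_Iic.2 hx₀.le)
      rw [hAe] at this
      exact notMem_empty x₀ this
    rw [hAe, measure_empty, hu0]
    simp
  have hbdd : BddAbove A := by
    by_contra hnb
    obtain ⟨x₁, hx₁⟩ := ((cum_tendsto_atTop hf h0 h1).eventually_const_lt hu1).exists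
    rw [not_bddAbove_iff] at hnb
    obtain ⟨a, ha, hxa⟩ := hnb x₁
    have : cum f a ≤ u := ha
    have : u < cum f a := lt_of_lt_of_le hx₁ (cum_mono hf h0 hxa.le)
    linarith
  have hAclosed : IsClosed A := IsClosed.preimage hcont isClosed_Iic
  have haA : sSup A ∈ A := hAclosed.csSup_mem hAne hbdd
  have hAIic : A = Iic (sSup A) := by
    ext t
    constructor
    · exact fun ht => le_csSup hbdd ht
    · intro ht
      exact le_trans (cum_mono hf h0 ht) haA
  have hFa : cum f (sSup A) = u := by
    refine le_antisymm haA ?_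
    have key : ∀ n : ℕ, u ≤ cum f (sSup A + 1 / (n + 1)) := by
      intro n
      by_contra hlt
      push_neg at hlt
      have : sSup A + 1 / ((n:ℝ) + 1) ∈ A := hlt.le
      have := le_csSup hbdd this
      have hpos : (0:ℝ) < 1 / ((n:ℝ) + 1) := by positivity
      linarith
    have hseq : Tendsto (fun n : ℕ => cum f (sSup A + 1 / (n + 1))) atTop (𝓝 (cum f (sSup A))) := by
      have h1' : Tendsto (fun n : ℕ => sSup A + 1 / ((n:ℝ) + 1)) atTop (𝓝 (sSup A + 0)) :=
        tendsto_const_nhds.add tendsto_one_div_add_atTop_nhds_zero_nat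
      rw [add_zero] at h1'
      exact (hcont.tendsto _).comp h1'
    exact ge_of_tendsto' hseq key
  rw [hAIic, densMeasure_apply hf h0 measurableSet_Iic]
  show ENNReal.ofReal (cum f (sSup A)) = _
  rw [hFa]

/-! ### Hoeffding machinery -/

open scoped Classical in
noncomputable def hh : ℝ → ℝ → ℝ := fun s x => (if s < x then 1 else 0) - (if s < 0 then 1 else 0)

lemma hh_meas : Measurable (fun q : ℝ × ℝ => hh q.1 q.2) := by
  unfold hh
  apply Measurable.sub
  · exact Measurable.ite (measurableSet_lt measurable_fst measurable_snd)
      measurable_const measurable_const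
  · exact Measurable.ite (measurableSet_lt measurable_fst measurable_const)
      measurable_const measurable_const

lemma hh_eq_pos {x : ℝ} (hx : 0 ≤ x) :
    (fun s => hh s x) = (Ico (0:ℝ) x).indicator (fun _ => (1:ℝ)) := by
  funext s
  rcases lt_or_ge s 0 with h2 | h2
  · have h1 : s < x := lt_of_lt_of_le h2 hx
    simp only [hh, if_pos h1, if_pos h2, indicator, mem_Ico]
    rw [if_neg (by intro h; linarith [h.1])]
    norm_num
  · rcases lt_or_ge s x with h1 | h1
    · simp only [hh, if_pos h1, if_neg (not_lt.2 h2), indicator, mem_Ico]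
      rw [if_pos ⟨h2, h1⟩]
      norm_num
    · simp only [hh, if_neg (not_lt.2 h1), if_neg (not_lt.2 h2), indicator, mem_Ico]
      rw [if_neg (by intro h; linarith [h.2])]
      norm_num

lemma hh_eq_neg {x : ℝ} (hx : x < 0) :
    (fun s => hh s x) = fun s => -((Ico x (0:ℝ)).indicator (fun _ => (1:ℝ)) s) := by
  funext s
  rcases lt_or_ge s x with h1 | h1
  · have h2 : s < 0 := lt_trans h1 hx
    simp only [hh, if_pos h1, if_pos h2, indicator, mem_Ico]
    rw [if_neg (by intro h; linarith [h.1])]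
    norm_num
  · rcases lt_or_ge s 0 with h2 | h2
    · simp only [hh, if_neg (not_lt.2 h1), if_pos h2, indicator, mem_Ico]
      rw [if_pos ⟨h1, h2⟩]
      norm_num
    · simp only [hh, if_neg (not_lt.2 h1), if_neg (not_lt.2 h2), indicator, mem_Ico]
      rw [if_neg (by intro h; linarith [h.2])]
      norm_num

lemma hh_integrable (x : ℝ) : Integrable (fun s => hh s x) volume := by
  rcases le_or_gt 0 x with hx | hx
  · rw [hh_eq_pos hx]
    exact (IntegrableOn.integrable_indicator
      (integrableOn_const measure_Ico_lt_top.ne) measurableSet_Ico)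
  · rw [hh_eq_neg hx]
    exact (IntegrableOn.integrable_indicator
      (integrableOn_const measure_Ico_lt_top.ne) measurableSet_Ico).neg

lemma hh_integral (x : ℝ) : ∫ s, hh s x = x := by
  rcases le_or_gt 0 x with hx | hx
  · rw [hh_eq_pos hx, integral_indicator_const _ measurableSet_Ico]
    simp [Real.volume_Ico, hx]
  · rw [hh_eq_neg hx]
    rw [integral_neg, integral_indicator_const _ measurableSet_Ico]
    simp only [Real.volume_Ico, smul_eq_mul, mul_one, sub_zero]
    rw [measureReal_def, Real.volume_Ico, ENNReal.toReal_ofReal (by linarith)]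
    ring

lemma hh_lintegral (x : ℝ) : ∫⁻ s, ‖hh s x‖₊ ∂volume = ENNReal.ofReal |x| := by
  rcases le_or_gt 0 x with hx | hx
  · have heq : (fun s => (‖hh s x‖₊ : ℝ≥0∞)) = (Ico (0:ℝ) x).indicator (fun _ => (1:ℝ≥0∞)) := by
      funext s
      have he := congrFun (hh_eq_pos hx) s
      by_cases h : s ∈ Ico (0:ℝ) x <;> simp [he, indicator, h]
    rw [show ∀ (g : ℝ → ℝ≥0∞), (∫⁻ s, g s ∂volume) = ∫⁻ s, g s ∂volume from fun _ => rfl]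
    calc ∫⁻ s, (‖hh s x‖₊ : ℝ≥0∞) ∂volume
        = ∫⁻ s, (Ico (0:ℝ) x).indicator (fun _ => (1:ℝ≥0∞)) s ∂volume := by rw [heq]
      _ = ENNReal.ofReal |x| := by
          rw [lintegral_indicator_const measurableSet_Ico, one_mul, Real.volume_Ico, sub_zero,
            abs_of_nonneg hx]
  · have heq : (fun s => (‖hh s x‖₊ : ℝ≥0∞)) = (Ico x (0:ℝ)).indicator (fun _ => (1:ℝ≥0∞)) := by
      funext s
      have he := congrFun (hh_eq_neg hx) s
      by_cases h : s ∈ Ico x (0:ℝ) <;> simp [he, indicator, h]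
    calc ∫⁻ s, (‖hh s x‖₊ : ℝ≥0∞) ∂volume
        = ∫⁻ s, (Ico x (0:ℝ)).indicator (fun _ => (1:ℝ≥0∞)) s ∂volume := by rw [heq]
      _ = ENNReal.ofReal |x| := by
          rw [lintegral_indicator_const measurableSet_Ico, one_mul, Real.volume_Ico,
            abs_of_neg hx]
          norm_num

section coupling

variable {π : Measure (ℝ × ℝ)}

lemma coupling_isProb {μ : Measure ℝ} [IsProbabilityMeasure μ]
    (hπ1 : π.map Prod.fst = μ) : IsProbabilityMeasure π := by
  constructor
  have h : (π.map Prod.fst) univ = 1 := by rw [hπ1, measure_univ]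
  rwa [Measure.map_apply measurable_fst MeasurableSet.univ, preimage_univ] at h

lemma G_meas : Measurable (fun q : (ℝ × ℝ) × ℝ × ℝ => hh q.2.1 q.1.1 * hh q.2.2 q.1.2) := by
  apply Measurable.mul
  · exact hh_meas.comp ((measurable_fst.comp measurable_snd).prodMk
      (measurable_fst.comp measurable_fst))
  · exact hh_meas.comp ((measurable_snd.comp measurable_snd).prodMk
      (measurable_snd.comp measurable_fst))

lemma abs_mul_integrable (hπ : IsProbabilityMeasure π)
    (hx2 : Integrable (fun z : ℝ × ℝ => z.1 ^ 2) π)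
    (hy2 : Integrable (fun z : ℝ × ℝ => z.2 ^ 2) π) :
    Integrable (fun z : ℝ × ℝ => |z.1| * |z.2|) π := by
  refine Integrable.mono' (((hx2.add hy2).div_const 2))
    ((continuous_abs.comp continuous_fst).mul
      (continuous_abs.comp continuous_snd)).aestronglyMeasurable
    (Eventually.of_forall fun z => ?_)
  have h1 : (0:ℝ) ≤ (|z.1| - |z.2|) ^ 2 := sq_nonneg _
  have h2 : |z.1| ^ 2 = z.1 ^ 2 := sq_abs _
  have h3 : |z.2| ^ 2 = z.2 ^ 2 := sq_abs _
  rw [Real.norm_eq_abs, abs_of_nonneg (by positivity : (0:ℝ) ≤ |z.1| * |z.2|)]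
  simp only [Pi.add_apply]
  nlinarith

lemma mul_repr (hπ : IsProbabilityMeasure π)
    (hx2 : Integrable (fun z : ℝ × ℝ => z.1 ^ 2) π)
    (hy2 : Integrable (fun z : ℝ × ℝ => z.2 ^ 2) π) :
    Integrable (fun z : ℝ × ℝ => z.1 * z.2) π
    ∧ Integrable (fun st : ℝ × ℝ => ∫ z, hh st.1 z.1 * hh st.2 z.2 ∂π)
        ((volume : Measure ℝ).prod (volume : Measure ℝ))
    ∧ ∫ z, z.1 * z.2 ∂π
        = ∫ st : ℝ × ℝ, ∫ z, hh st.1 z.1 * hh st.2 z.2 ∂π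
            ∂((volume : Measure ℝ).prod (volume : Measure ℝ)) := by
  have habs := abs_mul_integrable hπ hx2 hy2
  have hmul : Integrable (fun z : ℝ × ℝ => z.1 * z.2) π := by
    refine Integrable.mono' habs
      (continuous_fst.mul continuous_snd).aestronglyMeasurable
      (Eventually.of_forall fun z => ?_)
    rw [Real.norm_eq_abs, abs_mul]
  set G : (ℝ × ℝ) → (ℝ × ℝ) → ℝ := fun z st => hh st.1 z.1 * hh st.2 z.2 with hG
  have hGm : Measurable (Function.uncurry G) := by
    have : Function.uncurry G = fun q : (ℝ × ℝ) × ℝ × ℝ => hh q.2.1 q.1.1 * hh q.2.2 q.1.2 := rfl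
    rw [this]; exact G_meas
  have huncurry : Integrable (Function.uncurry G)
      (π.prod ((volume : Measure ℝ).prod (volume : Measure ℝ))) := by
    refine ⟨hGm.aestronglyMeasurable, ?_⟩
    show (∫⁻ q, (‖Function.uncurry G q‖₊ : ℝ≥0∞) ∂(π.prod (volume.prod volume))) < ⊤
    rw [lintegral_prod _ (by exact hGm.nnnorm.coe_nnreal_ennreal.aemeasurable)]
    have hinner : ∀ z : ℝ × ℝ,
        (∫⁻ st : ℝ × ℝ, ‖Function.uncurry G (z, st)‖₊
            ∂((volume : Measure ℝ).prod (volume : Measure ℝ)))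
          = ENNReal.ofReal (|z.1| * |z.2|) := by
      intro z
      have : ∀ st : ℝ × ℝ, (‖Function.uncurry G (z, st)‖₊ : ℝ≥0∞)
          = (‖hh st.1 z.1‖₊ : ℝ≥0∞) * (‖hh st.2 z.2‖₊ : ℝ≥0∞) := by
        intro st
        simp [Function.uncurry, hG, nnnorm_mul, ENNReal.coe_mul]
      calc (∫⁻ st : ℝ × ℝ, ‖Function.uncurry G (z, st)‖₊
              ∂((volume : Measure ℝ).prod (volume : Measure ℝ)))
          = ∫⁻ st : ℝ × ℝ, (‖hh st.1 z.1‖₊ : ℝ≥0∞) * (‖hh st.2 z.2‖₊ : ℝ≥0∞)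
              ∂((volume : Measure ℝ).prod (volume : Measure ℝ)) := by
            exact lintegral_congr this
        _ = (∫⁻ s, (‖hh s z.1‖₊ : ℝ≥0∞)) * ∫⁻ t, (‖hh t z.2‖₊ : ℝ≥0∞) := by
            have m1 : Measurable fun s : ℝ => (‖hh s z.1‖₊ : ℝ≥0∞) :=
              (hh_meas.comp (measurable_id.prodMk measurable_const)).nnnorm.coe_nnreal_ennreal
            have m2 : Measurable fun t : ℝ => (‖hh t z.2‖₊ : ℝ≥0∞) :=
              (hh_meas.comp (measurable_id.prodMk measurable_const)).nnnorm.coe_nnreal_ennreal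
            exact lintegral_prod_mul m1.aemeasurable m2.aemeasurable
        _ = ENNReal.ofReal |z.1| * ENNReal.ofReal |z.2| := by rw [hh_lintegral, hh_lintegral]
        _ = ENNReal.ofReal (|z.1| * |z.2|) := (ENNReal.ofReal_mul (abs_nonneg _)).symm
    calc ∫⁻ z, (∫⁻ st : ℝ × ℝ, ‖Function.uncurry G (z, st)‖₊
            ∂((volume : Measure ℝ).prod (volume : Measure ℝ))) ∂π
        = ∫⁻ z, ENNReal.ofReal (|z.1| * |z.2|) ∂π := lintegral_congr hinner
      _ = ∫⁻ z, (‖|z.1| * |z.2|‖₊ : ℝ≥0∞) ∂π := by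
          refine lintegral_congr fun z => ?_
          rw [← Real.enorm_eq_ofReal (by positivity : (0:ℝ) ≤ |z.1| * |z.2|)]; rfl
      _ < ⊤ := habs.2
  have hinner2 : ∀ z : ℝ × ℝ,
      (∫ st : ℝ × ℝ, G z st ∂((volume : Measure ℝ).prod (volume : Measure ℝ))) = z.1 * z.2 := by
    intro z
    have : (∫ st : ℝ × ℝ, G z st ∂((volume : Measure ℝ).prod (volume : Measure ℝ)))
        = ∫ st : ℝ × ℝ, (fun s => hh s z.1) st.1 * (fun t => hh t z.2) st.2
            ∂((volume : Measure ℝ).prod (volume : Measure ℝ)) := rfl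
    rw [this]
    have h2 := integral_prod_mul (μ := (volume : Measure ℝ)) (ν := (volume : Measure ℝ))
      (L := ℝ) (fun s => hh s z.1) (fun t => hh t z.2)
    rw [h2, hh_integral, hh_integral]
  have hswap := integral_integral_swap huncurry
  have hK : Integrable (fun st : ℝ × ℝ => ∫ z, hh st.1 z.1 * hh st.2 z.2 ∂π)
      ((volume : Measure ℝ).prod (volume : Measure ℝ)) := by
    have h := huncurry.swap.integral_prod_left
    exact h
  refine ⟨hmul, hK, ?_⟩
  calc ∫ z, z.1 * z.2 ∂π
      = ∫ z, (∫ st : ℝ × ℝ, G z st ∂((volume : Measure ℝ).prod (volume : Measure ℝ))) ∂π := by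
        exact (integral_congr_ae (Eventually.of_forall hinner2)).symm
    _ = ∫ st : ℝ × ℝ, ∫ z, G z st ∂π ∂((volume : Measure ℝ).prod (volume : Measure ℝ)) := hswap
    _ = _ := rfl

end coupling

open scoped Classical in
lemma K_formula (hπ : IsProbabilityMeasure π) {μ ν : Measure ℝ}
    (hπ1 : π.map Prod.fst = μ) (hπ2 : π.map Prod.snd = ν) (s t : ℝ) :
    ∫ z, hh s z.1 * hh t z.2 ∂π
      = (π {z : ℝ × ℝ | s < z.1 ∧ t < z.2}).toReal
        - (if s < 0 then (1:ℝ) else 0) * (ν (Ioi t)).toReal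
        - (if t < 0 then (1:ℝ) else 0) * (μ (Ioi s)).toReal
        + (if s < 0 then (1:ℝ) else 0) * (if t < 0 then (1:ℝ) else 0) := by
  set a : ℝ := if s < 0 then 1 else 0 with ha
  set b : ℝ := if t < 0 then 1 else 0 with hb
  set E : Set (ℝ × ℝ) := {z | s < z.1 ∧ t < z.2} with hE
  set E1 : Set (ℝ × ℝ) := {z | s < z.1} with hE1
  set E2 : Set (ℝ × ℝ) := {z | t < z.2} with hE2
  have hEm : MeasurableSet E := (measurableSet_lt measurable_const measurable_fst).inter
    (measurableSet_lt measurable_const measurable_snd)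
  have hE1m : MeasurableSet E1 := measurableSet_lt measurable_const measurable_fst
  have hE2m : MeasurableSet E2 := measurableSet_lt measurable_const measurable_snd
  have i0 : Integrable (E.indicator fun _ => (1:ℝ)) π := (integrable_const 1).indicator hEm
  have i1 : Integrable (E1.indicator fun _ => (1:ℝ)) π := (integrable_const 1).indicator hE1m
  have i2 : Integrable (E2.indicator fun _ => (1:ℝ)) π := (integrable_const 1).indicator hE2m
  have hrepr : (fun z : ℝ × ℝ => hh s z.1 * hh t z.2)
      = fun z => (E.indicator (fun _ => (1:ℝ)) z - a * E2.indicator (fun _ => (1:ℝ)) z)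
          - (b * E1.indicator (fun _ => (1:ℝ)) z - a * b) := by
    funext z
    simp only [hh, hE, hE1, hE2, indicator, mem_setOf_eq, ha, hb]
    by_cases h1 : s < z.1 <;> by_cases h2 : t < z.2 <;> by_cases h3 : s < 0 <;>
      by_cases h4 : t < 0 <;> simp [h1, h2, h3, h4]
  rw [hrepr]
  have j1 : Integrable
      (fun z : ℝ × ℝ => E.indicator (fun _ => (1:ℝ)) z - a * E2.indicator (fun _ => (1:ℝ)) z) π :=
    i0.sub (i2.const_mul a)
  have j2 : Integrable
      (fun z : ℝ × ℝ => b * E1.indicator (fun _ => (1:ℝ)) z - a * b) π :=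
    (i1.const_mul b).sub (integrable_const _)
  rw [integral_sub j1 j2,
    integral_sub i0 (i2.const_mul a), integral_sub (i1.const_mul b) (integrable_const (a * b)),
    integral_const_mul, integral_const_mul, integral_const,
    integral_indicator_const _ hEm, integral_indicator_const _ hE1m,
    integral_indicator_const _ hE2m]
  have hμs : π E1 = μ (Ioi s) := by
    rw [← hπ1, Measure.map_apply measurable_fst measurableSet_Ioi]; rfl
  have hνt : π E2 = ν (Ioi t) := by
    rw [← hπ2, Measure.map_apply measurable_snd measurableSet_Ioi]; rfl
  simp only [measureReal_def]; rw [hμs, hνt]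
  simp [measure_univ]
  ring

lemma integral_mul_le {μ ν : Measure ℝ} [IsProbabilityMeasure μ] [IsProbabilityMeasure ν]
    (hμ2 : Integrable (fun x : ℝ => x ^ 2) μ) (hν2 : Integrable (fun x : ℝ => x ^ 2) ν)
    {π π' : Measure (ℝ × ℝ)}
    (hπ1 : π.map Prod.fst = μ) (hπ2 : π.map Prod.snd = ν)
    (hπ'1 : π'.map Prod.fst = μ) (hπ'2 : π'.map Prod.snd = ν)
    (hmin : ∀ s t : ℝ, π' {z : ℝ × ℝ | s < z.1 ∧ t < z.2} = min (μ (Ioi s)) (ν (Ioi t))) :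
    ∫ z, z.1 * z.2 ∂π ≤ ∫ z, z.1 * z.2 ∂π' := by
  have hπp : IsProbabilityMeasure π := coupling_isProb hπ1
  have hπ'p : IsProbabilityMeasure π' := coupling_isProb hπ'1
  have hx2 : Integrable (fun z : ℝ × ℝ => z.1 ^ 2) π := by
    have h0 : Integrable (fun x : ℝ => x ^ 2) (π.map Prod.fst) := by rw [hπ1]; exact hμ2
    have h := (integrable_map_measure
      ((measurable_id.pow_const 2).aestronglyMeasurable) measurable_fst.aemeasurable).1 h0
    exact h
  have hy2 : Integrable (fun z : ℝ × ℝ => z.2 ^ 2) π := by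
    have h0 : Integrable (fun x : ℝ => x ^ 2) (π.map Prod.snd) := by rw [hπ2]; exact hν2
    exact (integrable_map_measure
      ((measurable_id.pow_const 2).aestronglyMeasurable) measurable_snd.aemeasurable).1 h0
  have hx2' : Integrable (fun z : ℝ × ℝ => z.1 ^ 2) π' := by
    have h0 : Integrable (fun x : ℝ => x ^ 2) (π'.map Prod.fst) := by rw [hπ'1]; exact hμ2
    exact (integrable_map_measure
      ((measurable_id.pow_const 2).aestronglyMeasurable) measurable_fst.aemeasurable).1 h0
  have hy2' : Integrable (fun z : ℝ × ℝ => z.2 ^ 2) π' := by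
    have h0 : Integrable (fun x : ℝ => x ^ 2) (π'.map Prod.snd) := by rw [hπ'2]; exact hν2
    exact (integrable_map_measure
      ((measurable_id.pow_const 2).aestronglyMeasurable) measurable_snd.aemeasurable).1 h0
  obtain ⟨hmul, hK, hrep⟩ := mul_repr hπp hx2 hy2
  obtain ⟨hmul', hK', hrep'⟩ := mul_repr hπ'p hx2' hy2'
  rw [hrep, hrep']
  refine integral_mono hK hK' fun st => ?_
  rw [K_formula hπp hπ1 hπ2 st.1 st.2, K_formula hπ'p hπ'1 hπ'2 st.1 st.2]
  have hmono : (π {z : ℝ × ℝ | st.1 < z.1 ∧ st.2 < z.2}).toReal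
      ≤ (π' {z : ℝ × ℝ | st.1 < z.1 ∧ st.2 < z.2}).toReal := by
    rw [hmin st.1 st.2]
    refine ENNReal.toReal_mono ?_ ?_
    · exact ne_of_lt (lt_of_le_of_lt (min_le_left _ _) (measure_lt_top μ _))
    · refine le_min ?_ ?_
      · calc π {z : ℝ × ℝ | st.1 < z.1 ∧ st.2 < z.2}
            ≤ π {z : ℝ × ℝ | st.1 < z.1} := measure_mono fun z hz => hz.1
          _ = μ (Ioi st.1) := by
              rw [← hπ1, Measure.map_apply measurable_fst measurableSet_Ioi]; rfl
      · calc π {z : ℝ × ℝ | st.1 < z.1 ∧ st.2 < z.2}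
            ≤ π {z : ℝ × ℝ | st.2 < z.2} := measure_mono fun z hz => hz.2
          _ = ν (Ioi st.2) := by
              rw [← hπ2, Measure.map_apply measurable_snd measurableSet_Ioi]; rfl
  linarith

lemma densMeasure_Ioi (hf : Integrable f) (h0 : ∀ x, 0 ≤ f x) (h1 : ∫ x, f x = 1) (s : ℝ) :
    densMeasure f (Ioi s) = ENNReal.ofReal (1 - cum f s) := by
  rw [densMeasure_apply hf h0 measurableSet_Ioi]
  congr 1
  have h := intervalIntegral.integral_Iic_add_Ioi (μ := volume) (b := s)
    hf.integrableOn hf.integrableOn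
  rw [h1] at h
  have : cum f s = ∫ x in Iic s, f x := rfl
  linarith

lemma lt_quantile_iff' (hf : Integrable f) (h0 : ∀ x, 0 ≤ f x) (h1 : ∫ x, f x = 1)
    {u s : ℝ} (hu0 : 0 < u) (hu1 : u < 1) :
    (s < genInvR (cum f) u → cum f s ≤ u) ∧ (cum f s < u → s < genInvR (cum f) u) := by
  constructor
  · intro h
    by_contra hc
    push_neg at hc
    exact absurd (quantile_le hf h0 h1 hu0 hc) (not_le.2 h)
  · intro h
    by_contra hc
    push_neg at hc
    exact absurd (le_cum_of_quantile_le hf h0 h1 hu0 hu1 hc) (not_le.2 h)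

section twodens

variable {p q : ℝ → ℝ}

lemma min_coupling
    (hp : Integrable p) (hp0 : ∀ x, 0 ≤ p x) (hp1 : ∫ x, p x = 1)
    (hq : Integrable q) (hq0 : ∀ x, 0 ≤ q x) (hq1 : ∫ x, q x = 1) (s t : ℝ) :
    (volume.restrict (Ioo (0:ℝ) 1)).map
        (fun u => (genInvR (cum p) u, genInvR (cum q) u)) {z : ℝ × ℝ | s < z.1 ∧ t < z.2}
      = min (densMeasure p (Ioi s)) (densMeasure q (Ioi t)) := by
  have hQp := quantile_measurable hp hp0 hp1
  have hQq := quantile_measurable hq hq0 hq1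
  have hpair : Measurable fun u : ℝ => (genInvR (cum p) u, genInvR (cum q) u) :=
    hQp.prodMk hQq
  have hSm : MeasurableSet {z : ℝ × ℝ | s < z.1 ∧ t < z.2} :=
    (measurableSet_lt measurable_const measurable_fst).inter
      (measurableSet_lt measurable_const measurable_snd)
  rw [Measure.map_apply hpair hSm, Measure.restrict_apply (hpair hSm)]
  set c : ℝ := max (cum p s) (cum q t) with hc
  have hc0 : 0 ≤ c := le_trans (cum_nonneg hp0 s) (le_max_left _ _)
  have hc1 : c ≤ 1 := max_le (cum_le_one hp hp0 hp1 s) (cum_le_one hq hq0 hq1 t)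
  have hkey : volume ((fun u => (genInvR (cum p) u, genInvR (cum q) u)) ⁻¹'
      {z : ℝ × ℝ | s < z.1 ∧ t < z.2} ∩ Ioo 0 1) = ENNReal.ofReal (1 - c) := by
    apply le_antisymm
    · calc volume ((fun u => (genInvR (cum p) u, genInvR (cum q) u)) ⁻¹'
            {z : ℝ × ℝ | s < z.1 ∧ t < z.2} ∩ Ioo 0 1) ≤ volume (Ico c 1) := by
            apply measure_mono
            rintro u ⟨hu, hu01⟩
            simp only [mem_preimage, mem_setOf_eq] at hu
            refine ⟨max_le ?_ ?_, hu01.2⟩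
            · exact (lt_quantile_iff' hp hp0 hp1 hu01.1 hu01.2).1 hu.1
            · exact (lt_quantile_iff' hq hq0 hq1 hu01.1 hu01.2).1 hu.2
        _ = ENNReal.ofReal (1 - c) := by rw [Real.volume_Ico]
    · calc ENNReal.ofReal (1 - c) = volume (Ioo c 1) := by rw [Real.volume_Ioo]
        _ ≤ volume ((fun u => (genInvR (cum p) u, genInvR (cum q) u)) ⁻¹'
            {z : ℝ × ℝ | s < z.1 ∧ t < z.2} ∩ Ioo 0 1) := by
            apply measure_mono
            rintro u ⟨hcu, hu1⟩
            have hu0 : 0 < u := lt_of_le_of_lt hc0 hcu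
            refine ⟨?_, hu0, hu1⟩
            simp only [mem_preimage, mem_setOf_eq]
            constructor
            · exact (lt_quantile_iff' hp hp0 hp1 hu0 hu1).2
                (lt_of_le_of_lt (le_max_left _ _) hcu)
            · exact (lt_quantile_iff' hq hq0 hq1 hu0 hu1).2
                (lt_of_le_of_lt (le_max_right _ _) hcu)
  rw [hkey, densMeasure_Ioi hp hp0 hp1, densMeasure_Ioi hq hq0 hq1]
  rcases le_total (cum p s) (cum q t) with h | h
  · rw [hc, max_eq_right h, min_eq_right (ENNReal.ofReal_le_ofReal (by linarith))]
  · rw [hc, max_eq_left h, min_eq_left (ENNReal.ofReal_le_ofReal (by linarith))]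

end twodens

end AuxCDT

/-- Isometry property of the CDT:
`d_{W²}²(p, q) = ∫ |C(p)(x) − C(q)(x)|² s₀(x) dx`. -/
theorem cdt_isometry (p q s₀ : ℝ → ℝ)
    (hp : Integrable p) (hp0 : ∀ x, 0 ≤ p x) (hp1 : ∫ x, p x = 1)
    (hq : Integrable q) (hq0 : ∀ x, 0 ≤ q x) (hq1 : ∫ x, q x = 1)
    (hr : Integrable s₀) (hr0 : ∀ x, 0 ≤ s₀ x) (hr1 : ∫ x, s₀ x = 1)
    (hp2 : Integrable (fun x => x ^ 2 * p x))
    (hq2 : Integrable (fun x => x ^ 2 * q x)) :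
    w2sq (densMeasure p) (densMeasure q) =
      ∫ x, |cdt s₀ p x - cdt s₀ q x| ^ 2 * s₀ x := by
  classical
  have hμP : IsProbabilityMeasure (densMeasure p) := densMeasure_prob hp hp0 hp1
  have hνP : IsProbabilityMeasure (densMeasure q) := densMeasure_prob hq hq0 hq1
  have hQpm : Measurable (genInvR (cum p)) := quantile_measurable hp hp0 hp1
  have hQqm : Measurable (genInvR (cum q)) := quantile_measurable hq hq0 hq1
  have hpairm : Measurable fun u : ℝ => (genInvR (cum p) u, genInvR (cum q) u) :=
    hQpm.prodMk hQqm
  set lam : Measure ℝ := volume.restrict (Ioo (0:ℝ) 1) with hlam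
  set pist : Measure (ℝ × ℝ) :=
    lam.map (fun u => (genInvR (cum p) u, genInvR (cum q) u)) with hpist
  have hfst : pist.map Prod.fst = densMeasure p := by
    rw [hpist, Measure.map_map measurable_fst hpairm]
    exact map_quantile hp hp0 hp1
  have hsnd : pist.map Prod.snd = densMeasure q := by
    rw [hpist, Measure.map_map measurable_snd hpairm]
    exact map_quantile hq hq0 hq1
  have hμ2 : Integrable (fun x : ℝ => x ^ 2) (densMeasure p) := by
    have ha : AEMeasurable (fun x => (p x).toNNReal) volume := hp.aemeasurable.real_toNNReal
    rw [show densMeasure p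
        = volume.withDensity (fun x => (((p x).toNNReal : ℝ≥0) : ℝ≥0∞)) from rfl,
      integrable_withDensity_iff_integrable_smul₀ ha]
    refine hp2.congr (Eventually.of_forall fun x => ?_)
    simp only [NNReal.smul_def, smul_eq_mul, Real.coe_toNNReal _ (hp0 x)]
    ring
  have hν2 : Integrable (fun x : ℝ => x ^ 2) (densMeasure q) := by
    have ha : AEMeasurable (fun x => (q x).toNNReal) volume := hq.aemeasurable.real_toNNReal
    rw [show densMeasure q
        = volume.withDensity (fun x => (((q x).toNNReal : ℝ≥0) : ℝ≥0∞)) from rfl,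
      integrable_withDensity_iff_integrable_smul₀ ha]
    refine hq2.congr (Eventually.of_forall fun x => ?_)
    simp only [NNReal.smul_def, smul_eq_mul, Real.coe_toNNReal _ (hq0 x)]
    ring
  set T : ℝ := ∫ u, (genInvR (cum p) u - genInvR (cum q) u) ^ 2 ∂lam with hT
  have hcost : ∫ z : ℝ × ℝ, (z.1 - z.2) ^ 2 ∂pist = T := by
    rw [hpist, integral_map (f := fun z : ℝ × ℝ => (z.1 - z.2) ^ 2) hpairm.aemeasurable
      ((continuous_fst.sub continuous_snd).pow 2).aestronglyMeasurable]
  have hmin : ∀ s t : ℝ, pist {z : ℝ × ℝ | s < z.1 ∧ t < z.2}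
      = min (densMeasure p (Ioi s)) (densMeasure q (Ioi t)) := fun s t =>
    min_coupling hp hp0 hp1 hq hq0 hq1 s t
  have hpistP : IsProbabilityMeasure pist := coupling_isProb hfst
  have cost_expand : ∀ ρ : Measure (ℝ × ℝ), IsProbabilityMeasure ρ →
      ρ.map Prod.fst = densMeasure p → ρ.map Prod.snd = densMeasure q →
      ∫ z : ℝ × ℝ, (z.1 - z.2) ^ 2 ∂ρ
        = (∫ x, x ^ 2 ∂densMeasure p) + (∫ x, x ^ 2 ∂densMeasure q)
            - 2 * ∫ z : ℝ × ℝ, z.1 * z.2 ∂ρ := by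
    intro ρ hρP hρ1 hρ2
    have hx2 : Integrable (fun z : ℝ × ℝ => z.1 ^ 2) ρ := by
      have h0 : Integrable (fun x : ℝ => x ^ 2) (ρ.map Prod.fst) := by rw [hρ1]; exact hμ2
      exact (integrable_map_measure
        ((measurable_id.pow_const 2).aestronglyMeasurable) measurable_fst.aemeasurable).1 h0
    have hy2 : Integrable (fun z : ℝ × ℝ => z.2 ^ 2) ρ := by
      have h0 : Integrable (fun x : ℝ => x ^ 2) (ρ.map Prod.snd) := by rw [hρ2]; exact hν2
      exact (integrable_map_measure
        ((measurable_id.pow_const 2).aestronglyMeasurable) measurable_snd.aemeasurable).1 h0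
    have hmul : Integrable (fun z : ℝ × ℝ => z.1 * z.2) ρ := (mul_repr hρP hx2 hy2).1
    have e : (fun z : ℝ × ℝ => (z.1 - z.2) ^ 2)
        = fun z : ℝ × ℝ => z.1 ^ 2 + z.2 ^ 2 - 2 * (z.1 * z.2) := funext fun z => by ring
    have hsum : Integrable (fun z : ℝ × ℝ => z.1 ^ 2 + z.2 ^ 2) ρ := hx2.add hy2
    have h2mul : Integrable (fun z : ℝ × ℝ => 2 * (z.1 * z.2)) ρ := hmul.const_mul 2
    rw [e, integral_sub hsum h2mul, integral_add hx2 hy2, integral_const_mul]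
    have e1 : ∫ z : ℝ × ℝ, z.1 ^ 2 ∂ρ = ∫ x, x ^ 2 ∂densMeasure p := by
      rw [← hρ1, integral_map measurable_fst.aemeasurable
        (continuous_pow 2).aestronglyMeasurable]
    have e2 : ∫ z : ℝ × ℝ, z.2 ^ 2 ∂ρ = ∫ x, x ^ 2 ∂densMeasure q := by
      rw [← hρ2, integral_map measurable_snd.aemeasurable
        (continuous_pow 2).aestronglyMeasurable]
    rw [e1, e2]
  have hlb : ∀ c ∈ {c : ℝ | ∃ π : Measure (ℝ × ℝ),
      π.map Prod.fst = densMeasure p ∧ π.map Prod.snd = densMeasure q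
        ∧ c = ∫ z : ℝ × ℝ, (z.1 - z.2) ^ 2 ∂π}, T ≤ c := by
    rintro c ⟨π, hπ1, hπ2, rfl⟩
    have hπP : IsProbabilityMeasure π := coupling_isProb hπ1
    rw [cost_expand π hπP hπ1 hπ2, ← hcost, cost_expand pist hpistP hfst hsnd]
    have hle := integral_mul_le hμ2 hν2 hπ1 hπ2 hfst hsnd hmin
    linarith
  have hmem : T ∈ {c : ℝ | ∃ π : Measure (ℝ × ℝ),
      π.map Prod.fst = densMeasure p ∧ π.map Prod.snd = densMeasure q
        ∧ c = ∫ z : ℝ × ℝ, (z.1 - z.2) ^ 2 ∂π} := ⟨pist, hfst, hsnd, hcost.symm⟩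
  have hW : w2sq (densMeasure p) (densMeasure q) = T :=
    le_antisymm (csInf_le ⟨T, hlb⟩ hmem) (le_csInf ⟨T, hmem⟩ hlb)
  rw [hW]
  -- right-hand side
  have hφm : Measurable fun u : ℝ => (genInvR (cum p) u - genInvR (cum q) u) ^ 2 :=
    (hQpm.sub hQqm).pow_const 2
  have e1 : (fun x => |cdt s₀ p x - cdt s₀ q x| ^ 2 * s₀ x)
      = fun x => (genInvR (cum p) (cum s₀ x) - genInvR (cum q) (cum s₀ x)) ^ 2 * s₀ x :=
    funext fun x => by rw [sq_abs]; rfl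
  rw [e1]
  have ha : AEMeasurable (fun x => (s₀ x).toNNReal) volume := hr.aemeasurable.real_toNNReal
  have e2 : ∫ x, (genInvR (cum p) (cum s₀ x) - genInvR (cum q) (cum s₀ x)) ^ 2 * s₀ x
      = ∫ x, (genInvR (cum p) (cum s₀ x) - genInvR (cum q) (cum s₀ x)) ^ 2
          ∂(densMeasure s₀) := by
    rw [show densMeasure s₀
        = volume.withDensity (fun x => (((s₀ x).toNNReal : ℝ≥0) : ℝ≥0∞)) from rfl,
      integral_withDensity_eq_integral_smul₀ ha]
    refine integral_congr_ae (Eventually.of_forall fun x => ?_)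
    simp only [NNReal.smul_def, smul_eq_mul, Real.coe_toNNReal _ (hr0 x)]
    ring
  rw [e2]
  have e3 : ∫ x, (genInvR (cum p) (cum s₀ x) - genInvR (cum q) (cum s₀ x)) ^ 2 ∂(densMeasure s₀)
      = ∫ u, (genInvR (cum p) u - genInvR (cum q) u) ^ 2 ∂((densMeasure s₀).map (cum s₀)) := by
    rw [integral_map (cum_continuous hr).measurable.aemeasurable hφm.aestronglyMeasurable]
  rw [e3, map_cum hr hr0 hr1]
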